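/- Let g : F(u,v) → Z ⋊ Z be the homomorphism with g(u) = (1,0) and g(v) = (0,1). For integers k and l with l ≥ 1, the element Γ_{k,l} = v^k u^l v u^l v^{-k-1} of F(u,v) satisfies Γ_{k,l} = ∏_{i=1}^{l} B_{k, l-i}, where B_{k,j} = v^k u^j (u v u v⁻¹) u^{-j} v^{-k} and the product is taken in order of increasing i. -/

import Mathlib

namespace KleinBU

/-- Generator `u` of the free group `F(u,v)`. -/
def u : FreeGroup Bool := FreeGroup.of true

/-- Generator `v` of the free group `F(u,v)`. -/
def v : FreeGroup Bool := FreeGroup.of false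

/-- The element `B = u v u v⁻¹`. -/
def Bel : FreeGroup Bool := u * v * u * v⁻¹

/-- The element `B_{k,l} = v^k u^l B u^{-l} v^{-k}`. -/
def Bkl (k l : ℤ) : FreeGroup Bool := v ^ k * u ^ l * Bel * u ^ (-l) * v ^ (-k)

end KleinBU

open KleinBU in
lemma flatMap_coe_range (L : List ℕ) :
    (List.flatMap (fun a : ℕ => [(a : ℤ)]) L) = L.map (fun a : ℕ => (a : ℤ)) := by
  induction L with
  | nil => rfl
  | cons a t ih => simp [List.flatMap_cons, ih]

open KleinBU in
lemma Gamma_eq_prod_aux (k : ℤ) (n : ℕ) (hn : 1 ≤ n) :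
    v ^ k * u ^ (n : ℤ) * v * u ^ (n : ℤ) * v ^ (-k - 1)
      = ((List.range n).map (fun i : ℕ => Bkl k ((n : ℤ) - 1 - (i : ℤ)))).prod := by
  induction n with
  | zero => omega
  | succ m ih =>
    rcases Nat.eq_zero_or_pos m with hm | hm
    · subst hm
      rw [show List.range 1 = [0] from rfl, List.map_singleton, List.prod_singleton]
      simp only [Bkl, Bel]
      norm_num
      group
    · rw [List.range_succ_eq_map, List.map_cons, List.prod_cons, List.map_map]
      have heq : ((List.range m).map
            ((fun i : ℕ => Bkl k ((↑(m + 1) : ℤ) - 1 - (i : ℤ))) ∘ Nat.succ))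
          = (List.range m).map (fun i : ℕ => Bkl k ((m : ℤ) - 1 - (i : ℤ))) := by
        apply List.map_congr_left
        intro i _
        simp only [Function.comp]
        push_cast
        ring_nf
      rw [heq, ← ih hm]
      have : ((↑(m + 1) : ℤ) - 1 - ((0 : ℕ) : ℤ)) = (m : ℤ) := by push_cast; ring
      rw [this]
      simp only [Bkl, Bel]
      push_cast
      group

open KleinBU in
/-- For `l ≥ 1`, the element `Γ_{k,l} = v^k u^l v u^l v^{-k-1}` equals the ordered product
`∏_{i=1}^{l} B_{k, l-i}` (in order of increasing `i`). -/
theorem Gamma_eq_prod (k l : ℤ) (hl : 1 ≤ l) :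
    v ^ k * u ^ l * v * u ^ l * v ^ (-k - 1)
      = ((List.range l.toNat).map (fun i => Bkl k (l - 1 - (i : ℤ)))).prod := by
  have h : (l.toNat : ℤ) = l := Int.toNat_of_nonneg (by omega)
  have key := Gamma_eq_prod_aux k l.toNat (by omega)
  rw [h] at key
  rw [key]
  congr 1
  show _ = List.map _ (List.flatMap (fun a : ℕ => [(a : ℤ)]) (List.range l.toNat))
  rw [flatMap_coe_range, List.map_map]
  rfl
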